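/- Let L be a 2×2 operator matrix function on Ω in H = H₁ ⊕ H₂ and let λ ∈ Ω satisfy: λ ∈ σ_ap(L); A(λ) and D(λ) are boundedly invertible; dom C(λ) ⊆ dom A(λ) and A(λ) is C(λ)-bounded; dom B(λ) ⊆ dom D(λ) and D(λ) is B(λ)-bounded; B(λ) and C(λ) are boundedly invertible. Then λ ∈ σ_ap(S₁) ∪ σ_ap(S₂). -/

import Mathlib

open Filter Topology

noncomputable section

variable {H₁ H₂ : Type*}
  [NormedAddCommGroup H₁] [InnerProductSpace ℂ H₁] [CompleteSpace H₁]
  [NormedAddCommGroup H₂] [InnerProductSpace ℂ H₂] [CompleteSpace H₂]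

/-- `R` is a bounded, everywhere defined inverse of the partially defined operator `S`. -/
def IsBddInv {K₁ K₂ : Type*} [NormedAddCommGroup K₁] [NormedSpace ℂ K₁]
    [NormedAddCommGroup K₂] [NormedSpace ℂ K₂]
    (S : K₁ →ₗ.[ℂ] K₂) (R : K₂ →L[ℂ] K₁) : Prop :=
  (∀ v : S.domain, R (S v) = v) ∧ ∀ h : K₂, ∃ hm : R h ∈ S.domain, S ⟨R h, hm⟩ = h

lemma schur_aux {K₁ K₂ : Type*}
    [NormedAddCommGroup K₁] [NormedSpace ℂ K₁]
    [NormedAddCommGroup K₂] [NormedSpace ℂ K₂]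
    (A : K₁ →ₗ.[ℂ] K₁) (B : K₂ →ₗ.[ℂ] K₁)
    (C : K₁ →ₗ.[ℂ] K₂) (D : K₂ →ₗ.[ℂ] K₂)
    (RD : K₂ →L[ℂ] K₂) (hRD : IsBddInv D RD)
    (RC : K₂ →L[ℂ] K₁) (hRC : IsBddInv C RC)
    (hCA : (C.domain : Set K₁) ⊆ (A.domain : Set K₁))
    (hAbd : ∃ a b : ℝ, 0 ≤ a ∧ 0 ≤ b ∧ ∀ (f : K₁) (hf : f ∈ C.domain),
      ‖A ⟨f, hCA hf⟩‖ ≤ a * ‖f‖ + b * ‖C ⟨f, hf⟩‖)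
    (f : ℕ → K₁) (g : ℕ → K₂)
    (hfA : ∀ n, f n ∈ A.domain) (hfC : ∀ n, f n ∈ C.domain)
    (hgB : ∀ n, g n ∈ B.domain) (hgD : ∀ n, g n ∈ D.domain)
    (hu : Tendsto (fun n => A ⟨f n, hfA n⟩ + B ⟨g n, hgB n⟩) atTop (𝓝 0))
    (hv : Tendsto (fun n => C ⟨f n, hfC n⟩ + D ⟨g n, hgD n⟩) atTop (𝓝 0))
    (hfreq : ∃ᶠ n in atTop, (1:ℝ)/2 ≤ ‖f n‖) :
    ∃ (f' : ℕ → K₁) (hfA' : ∀ n, f' n ∈ A.domain) (hfC' : ∀ n, f' n ∈ C.domain)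
      (hB : ∀ n, RD (C ⟨f' n, hfC' n⟩) ∈ B.domain),
      (∀ n, ‖f' n‖ = 1) ∧
      Tendsto (fun n => A ⟨f' n, hfA' n⟩
        - B ⟨RD (C ⟨f' n, hfC' n⟩), hB n⟩) atTop (𝓝 0) := by
  obtain ⟨φ, hφ, hφP⟩ := extraction_of_frequently_atTop hfreq
  set v : ℕ → K₂ := fun n => C ⟨f n, hfC n⟩ + D ⟨g n, hgD n⟩ with hv_def
  set u : ℕ → K₁ := fun n => A ⟨f n, hfA n⟩ + B ⟨g n, hgB n⟩ with hu_def
  have hvφ : Tendsto (fun n => v (φ n)) atTop (𝓝 0) := hv.comp hφ.tendsto_atTop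
  have hRCv : Tendsto (fun n => RC (v (φ n))) atTop (𝓝 0) := by
    simpa [Function.comp_def] using (RC.continuous.tendsto 0).comp hvφ
  have hsmall : ∃ N, ∀ n ≥ N, ‖RC (v (φ n))‖ < 1/4 := by
    have h2 : Tendsto (fun n => ‖RC (v (φ n))‖) atTop (𝓝 0) :=
      (continuous_norm.tendsto 0).comp hRCv |>.mono_right (by simp)
    exact eventually_atTop.mp (h2.eventually (eventually_lt_nhds (by norm_num : (0:ℝ) < 1/4)))
  obtain ⟨N, hN⟩ := hsmall
  set ρ : ℕ → ℕ := fun n => φ (n + N) with hρ_def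
  -- the shifted sequence
  set w : ℕ → K₁ := fun n => f (ρ n) - RC (v (ρ n)) with hw_def
  have hwC : ∀ n, w n ∈ C.domain := fun n =>
    sub_mem (hfC (ρ n)) (hRC.2 (v (ρ n))).choose
  have hwA : ∀ n, w n ∈ A.domain := fun n => hCA (hwC n)
  have hwnorm : ∀ n, (1:ℝ)/4 ≤ ‖w n‖ := by
    intro n
    have h1 : (1:ℝ)/2 ≤ ‖f (ρ n)‖ := hφP (n + N)
    have h2 : ‖RC (v (ρ n))‖ < 1/4 := hN (n + N) (Nat.le_add_left _ _)
    have := norm_sub_norm_le (f (ρ n)) (RC (v (ρ n)))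
    simp only [hw_def]
    linarith
  have hwpos : ∀ n, (0:ℝ) < ‖w n‖ := fun n => lt_of_lt_of_le (by norm_num) (hwnorm n)
  -- key computation: C w = - D g
  have hCw : ∀ n, C ⟨w n, hwC n⟩ = - D ⟨g (ρ n), hgD (ρ n)⟩ := by
    intro n
    have e1 : (⟨w n, hwC n⟩ : C.domain)
        = ⟨f (ρ n), hfC (ρ n)⟩ - ⟨RC (v (ρ n)), (hRC.2 (v (ρ n))).choose⟩ := rfl
    rw [e1, C.map_sub, (hRC.2 (v (ρ n))).choose_spec]
    simp [hv_def]
  -- hence RD (C w) = - g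
  have hRDCw : ∀ n, RD (C ⟨w n, hwC n⟩) = - g (ρ n) := by
    intro n
    rw [hCw n, map_neg RD]
    congr 1
    exact hRD.1 ⟨g (ρ n), hgD (ρ n)⟩
  -- A w = u - A (RC v)
  have hARCv : ∀ n, RC (v (ρ n)) ∈ A.domain := fun n => hCA (hRC.2 (v (ρ n))).choose
  have hAw : ∀ n, A ⟨w n, hwA n⟩
      = A ⟨f (ρ n), hfA (ρ n)⟩ - A ⟨RC (v (ρ n)), hARCv n⟩ := by
    intro n
    have e1 : (⟨w n, hwA n⟩ : A.domain)
        = ⟨f (ρ n), hfA (ρ n)⟩ - ⟨RC (v (ρ n)), hARCv n⟩ := rfl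
    rw [e1, A.map_sub]
  -- normalized sequence
  set c : ℕ → ℂ := fun n => ((‖w n‖ : ℝ) : ℂ)⁻¹ with hc_def
  set F : ℕ → K₁ := fun n => c n • w n with hF_def
  have hFC : ∀ n, F n ∈ C.domain := fun n => Submodule.smul_mem _ _ (hwC n)
  have hFA : ∀ n, F n ∈ A.domain := fun n => Submodule.smul_mem _ _ (hwA n)
  have hCF : ∀ n, C ⟨F n, hFC n⟩ = c n • C ⟨w n, hwC n⟩ := by
    intro n
    have e1 : (⟨F n, hFC n⟩ : C.domain) = c n • (⟨w n, hwC n⟩ : C.domain) := rfl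
    rw [e1, C.map_smul]
  have hRDCF : ∀ n, RD (C ⟨F n, hFC n⟩) = c n • (- g (ρ n)) := by
    intro n
    rw [hCF n, map_smul, hRDCw n]
  have hFB : ∀ n, RD (C ⟨F n, hFC n⟩) ∈ B.domain := by
    intro n
    rw [hRDCF n]
    exact Submodule.smul_mem _ _ (neg_mem (hgB (ρ n)))
  refine ⟨F, hFA, hFC, hFB, ?_, ?_⟩
  · intro n
    have : ‖F n‖ = ‖c n‖ * ‖w n‖ := norm_smul _ _
    rw [this]
    simp only [hc_def, norm_inv, Complex.norm_real, Real.norm_eq_abs,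
      abs_of_pos (hwpos n)]
    exact inv_mul_cancel₀ (ne_of_gt (hwpos n))
  · -- the Schur complement value
    have hval : ∀ n, A ⟨F n, hFA n⟩ - B ⟨RD (C ⟨F n, hFC n⟩), hFB n⟩
        = c n • (u (ρ n) - A ⟨RC (v (ρ n)), hARCv n⟩) := by
      intro n
      have e1 : (⟨F n, hFA n⟩ : A.domain) = c n • (⟨w n, hwA n⟩ : A.domain) := rfl
      have e2 : (⟨RD (C ⟨F n, hFC n⟩), hFB n⟩ : B.domain)
          = c n • (⟨- g (ρ n), neg_mem (hgB (ρ n))⟩ : B.domain) :=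
        Subtype.ext (hRDCF n)
      have e3 : (⟨- g (ρ n), neg_mem (hgB (ρ n))⟩ : B.domain)
          = - (⟨g (ρ n), hgB (ρ n)⟩ : B.domain) := rfl
      rw [e1, e2, A.map_smul, B.map_smul, e3, B.map_neg, ← smul_sub, sub_neg_eq_add,
        hAw n]
      congr 1
      simp only [hu_def]
      abel
    obtain ⟨a, b, ha, hb, habd⟩ := hAbd
    have hCRCv : ∀ n, C ⟨RC (v (ρ n)), (hRC.2 (v (ρ n))).choose⟩ = v (ρ n) :=
      fun n => (hRC.2 (v (ρ n))).choose_spec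
    have hbound : ∀ n, ‖A ⟨F n, hFA n⟩ - B ⟨RD (C ⟨F n, hFC n⟩), hFB n⟩‖
        ≤ 4 * (‖u (ρ n)‖ + (a * ‖RC (v (ρ n))‖ + b * ‖v (ρ n)‖)) := by
      intro n
      rw [hval n, norm_smul]
      have hc : ‖c n‖ ≤ 4 := by
        simp only [hc_def, norm_inv, Complex.norm_real, Real.norm_eq_abs,
          abs_of_pos (hwpos n)]
        have h4 : (‖w n‖)⁻¹ ≤ (1/4:ℝ)⁻¹ := inv_anti₀ (by norm_num) (hwnorm n)
        have : ((1:ℝ)/4)⁻¹ = 4 := by norm_num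
        linarith
      have hA' : ‖A ⟨RC (v (ρ n)), hARCv n⟩‖ ≤ a * ‖RC (v (ρ n))‖ + b * ‖v (ρ n)‖ := by
        have := habd (RC (v (ρ n))) (hRC.2 (v (ρ n))).choose
        rwa [hCRCv n] at this
      have htri : ‖u (ρ n) - A ⟨RC (v (ρ n)), hARCv n⟩‖
          ≤ ‖u (ρ n)‖ + (a * ‖RC (v (ρ n))‖ + b * ‖v (ρ n)‖) :=
        le_trans (norm_sub_le _ _) (by linarith)
      exact mul_le_mul hc htri (norm_nonneg _) (by norm_num)
    have hρtend : Tendsto ρ atTop atTop :=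
      hφ.tendsto_atTop.comp (tendsto_add_atTop_nat N)
    have huρ : Tendsto (fun n => ‖u (ρ n)‖) atTop (𝓝 0) := by
      have := (hu.comp hρtend)
      simpa [Function.comp_def] using (continuous_norm.tendsto 0).comp this
    have hvρ : Tendsto (fun n => ‖v (ρ n)‖) atTop (𝓝 0) := by
      have := (hv.comp hρtend)
      simpa [Function.comp_def] using (continuous_norm.tendsto 0).comp this
    have hRCvρ : Tendsto (fun n => ‖RC (v (ρ n))‖) atTop (𝓝 0) := by
      have h0 : Tendsto (fun n => v (ρ n)) atTop (𝓝 0) := hv.comp hρtend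
      have h1 : Tendsto (fun n => RC (v (ρ n))) atTop (𝓝 0) := by
        simpa [Function.comp_def] using (RC.continuous.tendsto 0).comp h0
      simpa [Function.comp_def] using (continuous_norm.tendsto 0).comp h1
    have hrhs : Tendsto (fun n => 4 * (‖u (ρ n)‖ + (a * ‖RC (v (ρ n))‖
        + b * ‖v (ρ n)‖))) atTop (𝓝 0) := by
      have := ((huρ.add ((hRCvρ.const_mul a).add (hvρ.const_mul b))).const_mul 4)
      simpa using this
    rw [tendsto_zero_iff_norm_tendsto_zero]
    exact squeeze_zero (fun n => norm_nonneg _) hbound hrhs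


/-- If `λ ∈ σ_ap(L)`, `A(λ)` and `D(λ)` are boundedly invertible, `A(λ)` is
`C(λ)`-bounded, `D(λ)` is `B(λ)`-bounded, and `B(λ)`, `C(λ)` are boundedly invertible,
then `λ` lies in the approximate point spectrum of one of the Schur complements
`S₁(λ) = A − B D⁻¹ C` or `S₂(λ) = D − C A⁻¹ B`. -/
theorem sigmaAp_mem_schur_of_offdiagonally_dominant
    (Ω : Set ℂ) (A : ℂ → H₁ →ₗ.[ℂ] H₁) (B : ℂ → H₂ →ₗ.[ℂ] H₁)
    (C : ℂ → H₁ →ₗ.[ℂ] H₂) (D : ℂ → H₂ →ₗ.[ℂ] H₂)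
    (l : ℂ) (hl : l ∈ Ω)
    (hap : ∃ (f : ℕ → H₁) (g : ℕ → H₂) (hfA : ∀ n, f n ∈ (A l).domain)
      (hfC : ∀ n, f n ∈ (C l).domain) (hgB : ∀ n, g n ∈ (B l).domain)
      (hgD : ∀ n, g n ∈ (D l).domain),
      (∀ n, ‖(WithLp.equiv 2 (H₁ × H₂)).symm (f n, g n)‖ = 1) ∧
      Tendsto (fun n => (WithLp.equiv 2 (H₁ × H₂)).symm
        ((A l) ⟨f n, hfA n⟩ + (B l) ⟨g n, hgB n⟩,
          (C l) ⟨f n, hfC n⟩ + (D l) ⟨g n, hgD n⟩)) atTop (𝓝 0))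
    (RA : H₁ →L[ℂ] H₁) (hRA : IsBddInv (A l) RA)
    (RD : H₂ →L[ℂ] H₂) (hRD : IsBddInv (D l) RD)
    (hCA : ((C l).domain : Set H₁) ⊆ ((A l).domain : Set H₁))
    (hAbd : ∃ a b : ℝ, 0 ≤ a ∧ 0 ≤ b ∧ ∀ (f : H₁) (hf : f ∈ (C l).domain),
      ‖(A l) ⟨f, hCA hf⟩‖ ≤ a * ‖f‖ + b * ‖(C l) ⟨f, hf⟩‖)
    (hBD : ((B l).domain : Set H₂) ⊆ ((D l).domain : Set H₂))
    (hDbd : ∃ a b : ℝ, 0 ≤ a ∧ 0 ≤ b ∧ ∀ (g : H₂) (hg : g ∈ (B l).domain),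
      ‖(D l) ⟨g, hBD hg⟩‖ ≤ a * ‖g‖ + b * ‖(B l) ⟨g, hg⟩‖)
    (RB : H₁ →L[ℂ] H₂) (hRB : IsBddInv (B l) RB)
    (RC : H₂ →L[ℂ] H₁) (hRC : IsBddInv (C l) RC) :
    (∃ (f : ℕ → H₁) (hfA : ∀ n, f n ∈ (A l).domain) (hfC : ∀ n, f n ∈ (C l).domain)
      (hB : ∀ n, RD ((C l) ⟨f n, hfC n⟩) ∈ (B l).domain),
      (∀ n, ‖f n‖ = 1) ∧
      Tendsto (fun n => (A l) ⟨f n, hfA n⟩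
        - (B l) ⟨RD ((C l) ⟨f n, hfC n⟩), hB n⟩) atTop (𝓝 0)) ∨
    (∃ (g : ℕ → H₂) (hgB : ∀ n, g n ∈ (B l).domain) (hgD : ∀ n, g n ∈ (D l).domain)
      (hC : ∀ n, RA ((B l) ⟨g n, hgB n⟩) ∈ (C l).domain),
      (∀ n, ‖g n‖ = 1) ∧
      Tendsto (fun n => (D l) ⟨g n, hgD n⟩
        - (C l) ⟨RA ((B l) ⟨g n, hgB n⟩), hC n⟩) atTop (𝓝 0)) := by
  obtain ⟨f, g, hfA, hfC, hgB, hgD, hnorm, htend⟩ := hap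
  set e := WithLp.prodContinuousLinearEquiv 2 ℂ H₁ H₂ with he
  have hpair : Tendsto (fun n =>
      ((A l) ⟨f n, hfA n⟩ + (B l) ⟨g n, hgB n⟩,
        (C l) ⟨f n, hfC n⟩ + (D l) ⟨g n, hgD n⟩)) atTop (𝓝 0) := by
    have := (e.continuous.tendsto 0).comp htend
    exact this
  have hu : Tendsto (fun n => (A l) ⟨f n, hfA n⟩ + (B l) ⟨g n, hgB n⟩)
      atTop (𝓝 0) := by
    have := (continuous_fst.tendsto ((0 : H₁ × H₂))).comp hpair
    simpa [Function.comp_def] using this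
  have hv : Tendsto (fun n => (C l) ⟨f n, hfC n⟩ + (D l) ⟨g n, hgD n⟩)
      atTop (𝓝 0) := by
    have := (continuous_snd.tendsto ((0 : H₁ × H₂))).comp hpair
    simpa [Function.comp_def] using this
  have hdich : ∀ n, (1:ℝ)/2 ≤ ‖f n‖ ∨ (1:ℝ)/2 ≤ ‖g n‖ := by
    intro n
    by_contra h
    push_neg at h
    obtain ⟨h1, h2⟩ := h
    have hsq : ‖(WithLp.equiv 2 (H₁ × H₂)).symm (f n, g n)‖ ^ 2
        = ‖f n‖ ^ 2 + ‖g n‖ ^ 2 :=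
      WithLp.prod_norm_sq_eq_of_L2 _
    rw [hnorm n] at hsq
    have hf0 : (0:ℝ) ≤ ‖f n‖ := norm_nonneg _
    have hg0 : (0:ℝ) ≤ ‖g n‖ := norm_nonneg _
    nlinarith
  have hfr : (∃ᶠ n in atTop, (1:ℝ)/2 ≤ ‖f n‖) ∨ ∃ᶠ n in atTop, (1:ℝ)/2 ≤ ‖g n‖ :=
    frequently_or_distrib.mp ((Filter.Eventually.of_forall hdich).frequently)
  rcases hfr with hfr | hfr
  · exact Or.inl (schur_aux (A l) (B l) (C l) (D l) RD hRD RC hRC hCA hAbd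
      f g hfA hfC hgB hgD hu hv hfr)
  · have hv' : Tendsto (fun n => (D l) ⟨g n, hgD n⟩ + (C l) ⟨f n, hfC n⟩)
        atTop (𝓝 0) := by simpa [add_comm] using hv
    have hu' : Tendsto (fun n => (B l) ⟨g n, hgB n⟩ + (A l) ⟨f n, hfA n⟩)
        atTop (𝓝 0) := by simpa [add_comm] using hu
    obtain ⟨g', h1, h2, h3, h4, h5⟩ := schur_aux (D l) (C l) (B l) (A l)
      RA hRA RB hRB hBD hDbd g f hgD hgB hfC hfA hv' hu' hfr
    exact Or.inr ⟨g', h2, h1, h3, h4, h5⟩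

end
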